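/- For b, c ∈ k, the left Λ-module M(1,b,c) is reflexive (i.e., the canonical evaluation map M(1,b,c) → M(1,b,c)** is bijective) if and only if b ≠ −q and b ≠ −q². -/

import Mathlib

open CategoryTheory Limits Opposite

/-- The algebra `Λ = Λ(q)` of Ringel–Zhang: a `k`-algebra with distinguished elements
`x, y, z` satisfying the defining relations
`x² = y² = z² = 0`, `yz = 0`, `xy + q·yx = 0`, `xz = zx`, `zy = zx`,
and admitting the `k`-basis `{1, x, y, z, yx, zx}`.
Any such algebra is canonically isomorphic to the quotient of the free algebra
`k⟨x,y,z⟩` by the two-sided ideal generated by these relations. -/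
structure LambdaAlg (k : Type) [Field k] (q : k) (Λ : Type) [Ring Λ] [Algebra k Λ] :
    Type where
  x : Λ
  y : Λ
  z : Λ
  hxx : x * x = 0
  hyy : y * y = 0
  hzz : z * z = 0
  hyz : y * z = 0
  hxy : x * y + q • (y * x) = 0
  hxz : x * z - z * x = 0
  hzy : z * y - z * x = 0
  basis : Module.Basis (Fin 6) k Λ
  hb0 : basis 0 = 1
  hb1 : basis 1 = x
  hb2 : basis 2 = y
  hb3 : basis 3 = z
  hb4 : basis 4 = y * x
  hb5 : basis 5 = z * x

namespace LambdaAlg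

variable {k : Type} [Field k] {q : k} {Λ : Type} [Ring Λ] [Algebra k Λ]

/-- The element `ax + by + cz` of `Λ`. -/
def w (D : LambdaAlg k q Λ) (a b c : k) : Λ := a • D.x + b • D.y + c • D.z

/-- The left ideal `U(a,b,c) = Λ(ax+by+cz) + Λ·yx + Λ·zx` of `Λ`. -/
def U (D : LambdaAlg k q Λ) (a b c : k) : Submodule Λ Λ :=
  Submodule.span Λ {D.w a b c, D.y * D.x, D.z * D.x}

/-- The left `Λ`-module `M(a,b,c) = Λ/U(a,b,c)`. -/
abbrev M (D : LambdaAlg k q Λ) (a b c : k) : Type := Λ ⧸ D.U a b c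

/-- The right ideal `U′(a,b,c) = (ax+by+cz)Λ + yx·Λ + zx·Λ` of `Λ`,
viewed as a `Λᵐᵒᵖ`-submodule of `Λ`. -/
def U' (D : LambdaAlg k q Λ) (a b c : k) : Submodule Λᵐᵒᵖ Λ :=
  Submodule.span Λᵐᵒᵖ {D.w a b c, D.y * D.x, D.z * D.x}

/-- The right `Λ`-module `M′(a,b,c) = Λ/U′(a,b,c)` (a module over `Λᵐᵒᵖ`). -/
abbrev M' (D : LambdaAlg k q Λ) (a b c : k) : Type := Λ ⧸ D.U' a b c

/-- The `k`-subspace `{m ∈ M : x·m = y·m = z·m = 0}` of a left `Λ`-module `M`;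
since `x, y, z` generate `rad Λ` and every simple `Λ`-module is isomorphic to `k`,
this is the socle of `M`. -/
def ann (D : LambdaAlg k q Λ) (M : Type) [AddCommGroup M] [Module k M] [Module Λ M]
    [IsScalarTower k Λ M] : Submodule k M where
  carrier := {m | D.x • m = 0 ∧ D.y • m = 0 ∧ D.z • m = 0}
  add_mem' := by
    rintro a b ⟨h1, h2, h3⟩ ⟨g1, g2, g3⟩
    simp [smul_add, h1, h2, h3, g1, g2, g3]
  zero_mem' := by simp
  smul_mem' := by
    rintro a m ⟨h1, h2, h3⟩
    refine ⟨?_, ?_, ?_⟩ <;> rw [smul_comm] <;> simp [h1, h2, h3]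

/-- The submodule `(rad Λ)·M = x·M + y·M + z·M` of a left `Λ`-module `M`. -/
def radM (D : LambdaAlg k q Λ) (M : Type) [AddCommGroup M] [Module Λ M] :
    Submodule Λ M :=
  Submodule.span Λ
    (Set.range (fun m : M => D.x • m) ∪ Set.range (fun m : M => D.y • m) ∪
      Set.range (fun m : M => D.z • m))

end LambdaAlg

/-- A module is indecomposable if it is nonzero and is not the direct sum of two
nonzero submodules. -/
def IsIndecomposable (R : Type) [Ring R] (M : Type) [AddCommGroup M] [Module R M] :
    Prop :=
  Nontrivial M ∧
    ∀ N₁ N₂ : Submodule R M, N₁ ⊓ N₂ = ⊥ → N₁ ⊔ N₂ = ⊤ → N₁ = ⊥ ∨ N₂ = ⊥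

/-- A module is torsionless if it admits an injective linear map into a finite free
module. -/
def IsTorsionless (R : Type) [Ring R] (M : Type) [AddCommGroup M] [Module R M] : Prop :=
  ∃ (n : ℕ) (f : M →ₗ[R] (Fin n → R)), Function.Injective f

/-- The canonical evaluation map `M → M** = Hom_{Λᵒᵖ}(Hom_Λ(M, Λ), Λ)`,
sending `m` to `f ↦ f m`. -/
def evalMap (Λ : Type) [Ring Λ] (M : Type) [AddCommGroup M] [Module Λ M] :
    M → ((M →ₗ[Λ] Λ) →ₗ[Λᵐᵒᵖ] Λ) := fun m =>
  { toFun := fun f => f m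
    map_add' := fun _ _ => rfl
    map_smul' := fun _ _ => rfl }

/-- The transformation `ω′(a,b,c) = (a, q⁻¹b, −((a+q⁻¹b)/a)·c)` on triples. -/
def omegaPrime {k : Type} [Field k] (q : k) (t : k × k × k) : k × k × k :=
  (t.1, q⁻¹ * t.2.1, -((t.1 + q⁻¹ * t.2.1) / t.1) * t.2.2)


section Aux14

namespace LambdaAlg

variable {k : Type} [Field k] {q : k} {Λ : Type} [Ring Λ] [Algebra k Λ]

variable (D : LambdaAlg k q Λ)

lemma xy : D.x * D.y = (-q) • (D.y * D.x) := by
  have h := D.hxy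
  rw [add_eq_zero_iff_eq_neg] at h
  rw [h, neg_smul]

lemma xz : D.x * D.z = D.z * D.x := sub_eq_zero.mp D.hxz
lemma zy : D.z * D.y = D.z * D.x := sub_eq_zero.mp D.hzy

lemma x_yx : D.x * (D.y * D.x) = 0 := by
  rw [← mul_assoc, D.xy, smul_mul_assoc, mul_assoc, D.hxx, mul_zero, smul_zero]
lemma y_yx : D.y * (D.y * D.x) = 0 := by rw [← mul_assoc, D.hyy, zero_mul]
lemma z_yx : D.z * (D.y * D.x) = 0 := by rw [← mul_assoc, D.zy, mul_assoc, D.hxx, mul_zero]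
lemma x_zx : D.x * (D.z * D.x) = 0 := by rw [← mul_assoc, D.xz, mul_assoc, D.hxx, mul_zero]
lemma y_zx : D.y * (D.z * D.x) = 0 := by rw [← mul_assoc, D.hyz, zero_mul]
lemma z_zx : D.z * (D.z * D.x) = 0 := by rw [← mul_assoc, D.hzz, zero_mul]
lemma yx_x : (D.y * D.x) * D.x = 0 := by rw [mul_assoc, D.hxx, mul_zero]
lemma yx_y : (D.y * D.x) * D.y = 0 := by
  rw [mul_assoc, D.xy, mul_smul_comm, D.y_yx, smul_zero]
lemma yx_z : (D.y * D.x) * D.z = 0 := by rw [mul_assoc, D.xz, D.y_zx]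
lemma zx_x : (D.z * D.x) * D.x = 0 := by rw [mul_assoc, D.hxx, mul_zero]
lemma zx_y : (D.z * D.x) * D.y = 0 := by
  rw [mul_assoc, D.xy, mul_smul_comm, D.z_yx, smul_zero]
lemma zx_z : (D.z * D.x) * D.z = 0 := by rw [mul_assoc, D.xz, D.z_zx]
lemma yx_yx : (D.y * D.x) * (D.y * D.x) = 0 := by rw [mul_assoc, D.x_yx, mul_zero]
lemma yx_zx : (D.y * D.x) * (D.z * D.x) = 0 := by rw [mul_assoc, D.x_zx, mul_zero]
lemma zx_yx : (D.z * D.x) * (D.y * D.x) = 0 := by rw [mul_assoc, D.x_yx, mul_zero]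
lemma zx_zx : (D.z * D.x) * (D.z * D.x) = 0 := by rw [mul_assoc, D.x_zx, mul_zero]

/-- linear combination of the six basis monomials -/
def cmb (a₀ a₁ a₂ a₃ a₄ a₅ : k) : Λ :=
  a₀ • (1 : Λ) + a₁ • D.x + a₂ • D.y + a₃ • D.z + a₄ • (D.y * D.x) + a₅ • (D.z * D.x)

lemma cmb_basis (a₀ a₁ a₂ a₃ a₄ a₅ : k) :
    cmb D a₀ a₁ a₂ a₃ a₄ a₅ =
      a₀ • D.basis 0 + a₁ • D.basis 1 + a₂ • D.basis 2 + a₃ • D.basis 3 +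
        a₄ • D.basis 4 + a₅ • D.basis 5 := by
  rw [D.hb0, D.hb1, D.hb2, D.hb3, D.hb4, D.hb5]; rfl

lemma repr_cmb0 (a₀ a₁ a₂ a₃ a₄ a₅ : k) :
    D.basis.repr (cmb D a₀ a₁ a₂ a₃ a₄ a₅) 0 = a₀ := by
  rw [cmb_basis]; simp [Finsupp.single_apply]
lemma repr_cmb1 (a₀ a₁ a₂ a₃ a₄ a₅ : k) :
    D.basis.repr (cmb D a₀ a₁ a₂ a₃ a₄ a₅) 1 = a₁ := by
  rw [cmb_basis]; simp [Finsupp.single_apply]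
lemma repr_cmb2 (a₀ a₁ a₂ a₃ a₄ a₅ : k) :
    D.basis.repr (cmb D a₀ a₁ a₂ a₃ a₄ a₅) 2 = a₂ := by
  rw [cmb_basis]; simp [Finsupp.single_apply]
lemma repr_cmb3 (a₀ a₁ a₂ a₃ a₄ a₅ : k) :
    D.basis.repr (cmb D a₀ a₁ a₂ a₃ a₄ a₅) 3 = a₃ := by
  rw [cmb_basis]; simp [Finsupp.single_apply]
lemma repr_cmb4 (a₀ a₁ a₂ a₃ a₄ a₅ : k) :
    D.basis.repr (cmb D a₀ a₁ a₂ a₃ a₄ a₅) 4 = a₄ := by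
  rw [cmb_basis]; simp [Finsupp.single_apply]
lemma repr_cmb5 (a₀ a₁ a₂ a₃ a₄ a₅ : k) :
    D.basis.repr (cmb D a₀ a₁ a₂ a₃ a₄ a₅) 5 = a₅ := by
  rw [cmb_basis]; simp [Finsupp.single_apply]

lemma cmb_inj {a₀ a₁ a₂ a₃ a₄ a₅ b₀ b₁ b₂ b₃ b₄ b₅ : k}
    (h : cmb D a₀ a₁ a₂ a₃ a₄ a₅ = cmb D b₀ b₁ b₂ b₃ b₄ b₅) :
    a₀ = b₀ ∧ a₁ = b₁ ∧ a₂ = b₂ ∧ a₃ = b₃ ∧ a₄ = b₄ ∧ a₅ = b₅ := by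
  refine ⟨?_, ?_, ?_, ?_, ?_, ?_⟩
  · have h0 := congrArg (fun u => D.basis.repr u 0) h
    simpa [repr_cmb0] using h0
  · have h0 := congrArg (fun u => D.basis.repr u 1) h
    simpa [repr_cmb1] using h0
  · have h0 := congrArg (fun u => D.basis.repr u 2) h
    simpa [repr_cmb2] using h0
  · have h0 := congrArg (fun u => D.basis.repr u 3) h
    simpa [repr_cmb3] using h0
  · have h0 := congrArg (fun u => D.basis.repr u 4) h
    simpa [repr_cmb4] using h0
  · have h0 := congrArg (fun u => D.basis.repr u 5) h
    simpa [repr_cmb5] using h0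

lemma cmb_zero : cmb D 0 0 0 0 0 0 = (0 : Λ) := by simp [cmb]

lemma cmb_eq_zero {a₀ a₁ a₂ a₃ a₄ a₅ : k}
    (h : cmb D a₀ a₁ a₂ a₃ a₄ a₅ = (0 : Λ)) :
    a₀ = 0 ∧ a₁ = 0 ∧ a₂ = 0 ∧ a₃ = 0 ∧ a₄ = 0 ∧ a₅ = 0 := by
  exact D.cmb_inj (by rw [h, cmb_zero])

lemma expand (u : Λ) :
    u = cmb D (D.basis.repr u 0) (D.basis.repr u 1) (D.basis.repr u 2)
      (D.basis.repr u 3) (D.basis.repr u 4) (D.basis.repr u 5) := by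
  rw [cmb_basis]
  have h := D.basis.sum_repr u
  rw [Fin.sum_univ_six] at h
  exact h.symm

lemma cmb_mul (a₀ a₁ a₂ a₃ a₄ a₅ b₀ b₁ b₂ b₃ b₄ b₅ : k) :
    cmb D a₀ a₁ a₂ a₃ a₄ a₅ * cmb D b₀ b₁ b₂ b₃ b₄ b₅ =
      cmb D (a₀*b₀) (a₀*b₁ + a₁*b₀) (a₀*b₂ + a₂*b₀) (a₀*b₃ + a₃*b₀)
        (a₀*b₄ + a₄*b₀ + a₂*b₁ - q*(a₁*b₂)) (a₀*b₅ + a₅*b₀ + a₁*b₃ + a₃*b₁ + a₃*b₂) := by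
  simp only [cmb, mul_add, add_mul, smul_mul_assoc, mul_smul_comm, smul_smul,
    one_mul, mul_one, D.hxx, D.hyy, D.hzz, D.hyz, D.xy, D.xz, D.zy,
    D.x_yx, D.y_yx, D.z_yx, D.x_zx, D.y_zx, D.z_zx, D.yx_x, D.yx_y, D.yx_z,
    D.zx_x, D.zx_y, D.zx_z, D.yx_yx, D.yx_zx, D.zx_yx, D.zx_zx, smul_zero,
    add_zero, zero_add]
  module


lemma cmb_congr {a₀ a₁ a₂ a₃ a₄ a₅ b₀ b₁ b₂ b₃ b₄ b₅ : k} (h₀ : a₀ = b₀) (h₁ : a₁ = b₁)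
    (h₂ : a₂ = b₂) (h₃ : a₃ = b₃) (h₄ : a₄ = b₄) (h₅ : a₅ = b₅) :
    cmb D a₀ a₁ a₂ a₃ a₄ a₅ = cmb D b₀ b₁ b₂ b₃ b₄ b₅ := by
  rw [h₀, h₁, h₂, h₃, h₄, h₅]

lemma mul_cmb_right (u : Λ) (b₀ b₁ b₂ b₃ b₄ b₅ : k) :
    u * cmb D b₀ b₁ b₂ b₃ b₄ b₅ =
      cmb D (D.basis.repr u 0 * b₀)
        (D.basis.repr u 0 * b₁ + D.basis.repr u 1 * b₀)
        (D.basis.repr u 0 * b₂ + D.basis.repr u 2 * b₀)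
        (D.basis.repr u 0 * b₃ + D.basis.repr u 3 * b₀)
        (D.basis.repr u 0 * b₄ + D.basis.repr u 4 * b₀ + D.basis.repr u 2 * b₁ -
          q * (D.basis.repr u 1 * b₂))
        (D.basis.repr u 0 * b₅ + D.basis.repr u 5 * b₀ + D.basis.repr u 1 * b₃ +
          D.basis.repr u 3 * b₁ + D.basis.repr u 3 * b₂) := by
  conv_lhs => rw [D.expand u]
  rw [cmb_mul]

lemma cmb_mul_left (u : Λ) (a₀ a₁ a₂ a₃ a₄ a₅ : k) :
    cmb D a₀ a₁ a₂ a₃ a₄ a₅ * u =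
      cmb D (a₀ * D.basis.repr u 0)
        (a₀ * D.basis.repr u 1 + a₁ * D.basis.repr u 0)
        (a₀ * D.basis.repr u 2 + a₂ * D.basis.repr u 0)
        (a₀ * D.basis.repr u 3 + a₃ * D.basis.repr u 0)
        (a₀ * D.basis.repr u 4 + a₄ * D.basis.repr u 0 + a₂ * D.basis.repr u 1 -
          q * (a₁ * D.basis.repr u 2))
        (a₀ * D.basis.repr u 5 + a₅ * D.basis.repr u 0 + a₁ * D.basis.repr u 3 +
          a₃ * D.basis.repr u 1 + a₃ * D.basis.repr u 2) := by
  conv_lhs => rw [D.expand u]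
  rw [cmb_mul]

variable (b c : k)

lemma w_cmb : D.w 1 b c = cmb D 0 1 b c 0 0 := by
  simp only [LambdaAlg.w, cmb]
  module

lemma yx_cmb : D.y * D.x = cmb D 0 0 0 0 1 0 := by simp [cmb]
lemma zx_cmb : D.z * D.x = cmb D 0 0 0 0 0 1 := by simp [cmb]
lemma z_cmb : D.z = cmb D 0 0 0 1 0 0 := by simp [cmb]
lemma one_cmb : (1 : Λ) = cmb D 1 0 0 0 0 0 := by simp [cmb]

lemma mem_U (s t r : k) : cmb D 0 s (b*s) (c*s) t r ∈ D.U 1 b c := by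
  have hrw : cmb D 0 s (b*s) (c*s) t r =
      s • D.w 1 b c + t • (D.y * D.x) + r • (D.z * D.x) := by
    simp only [LambdaAlg.w, cmb, smul_add, smul_smul]
    module
  rw [hrw]
  refine Submodule.add_mem _ (Submodule.add_mem _ ?_ ?_) ?_
  · rw [← algebraMap_smul Λ s]
    exact Submodule.smul_mem _ _ (Submodule.subset_span (by left; rfl))
  · rw [← algebraMap_smul Λ t]
    exact Submodule.smul_mem _ _ (Submodule.subset_span (by right; left; rfl))
  · rw [← algebraMap_smul Λ r]
    exact Submodule.smul_mem _ _ (Submodule.subset_span (by right; right; rfl))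

lemma U_elements {u : Λ} (hu : u ∈ D.U 1 b c) :
    ∃ s t r : k, u = cmb D 0 s (b*s) (c*s) t r := by
  rw [LambdaAlg.U, show ({D.w 1 b c, D.y * D.x, D.z * D.x} : Set Λ) =
      insert (D.w 1 b c) {D.y * D.x, D.z * D.x} from rfl,
    Submodule.mem_span_insert] at hu
  obtain ⟨A, v, hv, rfl⟩ := hu
  rw [Submodule.mem_span_pair] at hv
  obtain ⟨P, Q, rfl⟩ := hv
  rw [smul_eq_mul, smul_eq_mul, smul_eq_mul, w_cmb, yx_cmb, zx_cmb,
    mul_cmb_right, mul_cmb_right, mul_cmb_right]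
  refine ⟨D.basis.repr A 0,
    D.basis.repr A 2 - q * (D.basis.repr A 1 * b) + D.basis.repr P 0,
    D.basis.repr A 1 * c + D.basis.repr A 3 + D.basis.repr A 3 * b + D.basis.repr Q 0, ?_⟩
  simp only [cmb]
  match_scalars <;> ring

/-- `λ₁ = x + (b/q)y - c(1+b/q)z`, the generator of `{μ : Uμ = 0}`. -/
def lam1 : Λ := cmb D 0 1 (b/q) (-(c*(1+b/q))) 0 0

/-- `w'' = x + (b/q²)y + c(1+b/q)(1+b/q²)z`, generator of the right annihilator of `λ₁`. -/
def wpp : Λ := cmb D 0 (q^4) (q^2*b) (c*q*(q+b)*(q^2+b)) 0 0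

variable (hq : q ≠ 0)
include hq

lemma w_mul_lam1 : D.w 1 b c * lam1 D b c = 0 := by
  rw [w_cmb, lam1, cmb_mul, ← D.cmb_zero]
  exact D.cmb_congr (by ring) (by ring) (by ring) (by ring) (by field_simp; ring) (by ring)

lemma yx_mul_lam1 : (D.y * D.x) * lam1 D b c = 0 := by
  rw [yx_cmb, lam1, cmb_mul, ← D.cmb_zero]
  exact D.cmb_congr (by ring) (by ring) (by ring) (by ring) (by ring) (by ring)

lemma zx_mul_lam1 : (D.z * D.x) * lam1 D b c = 0 := by
  rw [zx_cmb, lam1, cmb_mul, ← D.cmb_zero]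
  exact D.cmb_congr (by ring) (by ring) (by ring) (by ring) (by ring) (by ring)

lemma lam1_mul_yx : lam1 D b c * (D.y * D.x) = 0 := by
  rw [yx_cmb, lam1, cmb_mul, ← D.cmb_zero]
  exact D.cmb_congr (by ring) (by ring) (by ring) (by ring) (by ring) (by ring)

lemma lam1_mul_zx : lam1 D b c * (D.z * D.x) = 0 := by
  rw [zx_cmb, lam1, cmb_mul, ← D.cmb_zero]
  exact D.cmb_congr (by ring) (by ring) (by ring) (by ring) (by ring) (by ring)

lemma lam1_mul_wpp : lam1 D b c * wpp D b c = 0 := by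
  rw [wpp, lam1, cmb_mul, ← D.cmb_zero]
  refine D.cmb_congr (by ring) (by ring) (by ring) (by ring) ?_ ?_
  · field_simp
    try ring
  · field_simp
    try ring

omit hq

/-- The map `f₁ : M(1,b,c) → Λ`, `λ̄ ↦ λ·λ₁`. -/
noncomputable def f1 (hq : q ≠ 0) : (D.M 1 b c) →ₗ[Λ] Λ :=
  Submodule.liftQ (D.U 1 b c) (LinearMap.toSpanSingleton Λ Λ (lam1 D b c)) (by
    rw [LambdaAlg.U, Submodule.span_le]
    rintro u (rfl | rfl | rfl) <;>
      simp only [SetLike.mem_coe, LinearMap.mem_ker, LinearMap.toSpanSingleton_apply,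
        smul_eq_mul]
    · exact D.w_mul_lam1 b c hq
    · exact D.yx_mul_lam1 b c hq
    · exact D.zx_mul_lam1 b c hq)

lemma f1_apply (hq : q ≠ 0) (u : Λ) :
    f1 D b c hq ((D.U 1 b c).mkQ u) = u * lam1 D b c := by
  simp [f1, LinearMap.toSpanSingleton_apply, smul_eq_mul]

lemma mk_smul_one (u : Λ) :
    (D.U 1 b c).mkQ u = u • (D.U 1 b c).mkQ 1 := by
  rw [← map_smul, smul_eq_mul, mul_one]

include hq

/-- Any `Λ`-linear functional on `M(1,b,c)` takes `1̄` into `span{λ₁, yx, zx}`. -/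
lemma value_constraint (f : (D.M 1 b c) →ₗ[Λ] Λ) :
    ∃ s t r : k, f ((D.U 1 b c).mkQ 1) =
      cmb D 0 s (b/q*s) (-(c*(1+b/q))*s) t r := by
  set μ := f ((D.U 1 b c).mkQ 1) with hμ
  have hw0 : (D.U 1 b c).mkQ (D.w 1 b c) = 0 := by
    rw [Submodule.mkQ_apply, Submodule.Quotient.mk_eq_zero]
    exact Submodule.subset_span (by left; rfl)
  have hwmu : D.w 1 b c * μ = 0 := by
    have := congrArg f hw0
    rwa [mk_smul_one, map_smul, map_zero, ← hμ, smul_eq_mul] at this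
  rw [w_cmb] at hwmu
  conv_lhs at hwmu => rw [D.expand μ, cmb_mul]
  obtain ⟨-, h1, -, -, h4, h5⟩ := D.cmb_eq_zero hwmu
  have h2 : D.basis.repr μ 2 = b / q * D.basis.repr μ 1 := by
    field_simp
    linear_combination -h4
  refine ⟨D.basis.repr μ 1, D.basis.repr μ 4, D.basis.repr μ 5, ?_⟩
  conv_lhs => rw [D.expand μ]
  refine D.cmb_congr (by linear_combination h1) rfl h2 ?_ rfl rfl
  linear_combination h5 - c * h2

omit hq

lemma cmb_smul (s a₀ a₁ a₂ a₃ a₄ a₅ : k) :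
    s • cmb D a₀ a₁ a₂ a₃ a₄ a₅ = cmb D (s*a₀) (s*a₁) (s*a₂) (s*a₃) (s*a₄) (s*a₅) := by
  simp only [cmb, smul_add, smul_smul]

lemma cmb_sub (a₀ a₁ a₂ a₃ a₄ a₅ b₀ b₁ b₂ b₃ b₄ b₅ : k) :
    cmb D a₀ a₁ a₂ a₃ a₄ a₅ - cmb D b₀ b₁ b₂ b₃ b₄ b₅ =
      cmb D (a₀-b₀) (a₁-b₁) (a₂-b₂) (a₃-b₃) (a₄-b₄) (a₅-b₅) := by
  simp only [cmb]
  module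

lemma z_not_mem_U : D.z ∉ D.U 1 b c := by
  intro h
  obtain ⟨s, t, r, he⟩ := D.U_elements b c h
  rw [z_cmb] at he
  obtain ⟨-, h1, -, h3, -, -⟩ := D.cmb_inj he
  exact one_ne_zero (α := k) (by rw [h3, ← h1, mul_zero])

lemma not_inj (hq : q ≠ 0) (hb : b = -q) :
    ¬ Function.Injective (evalMap Λ (D.M 1 b c)) := by
  intro hinj
  have hzz : evalMap Λ (D.M 1 b c) ((D.U 1 b c).mkQ D.z) = evalMap Λ (D.M 1 b c) 0 := by
    apply LinearMap.ext
    intro f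
    show f ((D.U 1 b c).mkQ D.z) = f 0
    rw [map_zero]
    obtain ⟨s, t, r, hμ⟩ := D.value_constraint b c hq f
    rw [mk_smul_one, map_smul, smul_eq_mul, hμ, z_cmb, cmb_mul, ← D.cmb_zero]
    subst hb
    exact D.cmb_congr (by ring) (by ring) (by ring) (by ring) (by ring) (by field_simp; ring)
  have hz0 := hinj hzz
  rw [Submodule.mkQ_apply, Submodule.Quotient.mk_eq_zero] at hz0
  exact D.z_not_mem_U b c hz0

lemma eval_injective (hq : q ≠ 0) (hb : b ≠ -q) :
    Function.Injective (evalMap Λ (D.M 1 b c)) := by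
  have hqb : q + b ≠ 0 := by
    intro hc
    exact hb (by linear_combination hc)
  intro m₁ m₂ h
  obtain ⟨u₁, rfl⟩ := Submodule.mkQ_surjective _ m₁
  obtain ⟨u₂, rfl⟩ := Submodule.mkQ_surjective _ m₂
  have h2 : f1 D b c hq ((D.U 1 b c).mkQ u₁) = f1 D b c hq ((D.U 1 b c).mkQ u₂) :=
    DFunLike.congr_fun h (f1 D b c hq)
  rw [f1_apply, f1_apply] at h2
  set u := u₁ - u₂ with hu
  have hsub : u * lam1 D b c = 0 := by rw [hu, sub_mul, h2, sub_self]
  rw [lam1, mul_cmb_right] at hsub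
  obtain ⟨-, h1, -, -, h4, h5⟩ := D.cmb_eq_zero hsub
  simp only [mul_one, mul_zero, add_zero, zero_add] at h1 h4 h5
  have h4' : D.basis.repr u 2 = b * D.basis.repr u 1 := by
    field_simp at h4
    apply mul_left_cancel₀ hq
    first
    | linear_combination h4
    | linear_combination -h4
    | linear_combination q * h4
    | linear_combination -(q * h4)
  have h5' : D.basis.repr u 3 = c * D.basis.repr u 1 := by
    have h5q : D.basis.repr u 3 * (q + b) =
        c * D.basis.repr u 1 * (q + b) := by
      field_simp at h5
      first
      | linear_combination h5
      | linear_combination -h5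
      | linear_combination q * h5
      | linear_combination -(q * h5)
      | linear_combination h4 + h5
    exact mul_right_cancel₀ hqb h5q
  rw [Submodule.mkQ_apply, Submodule.mkQ_apply, Submodule.Quotient.eq]
  rw [← hu]
  have : u = cmb D 0 (D.basis.repr u 1) (b * D.basis.repr u 1)
      (c * D.basis.repr u 1) (D.basis.repr u 4)
      (D.basis.repr u 5) := by
    conv_lhs => rw [D.expand u]
    exact D.cmb_congr h1 rfl h4' h5' rfl rfl
  rw [this]
  exact D.mem_U b c _ _ _

lemma eval_surjective (hq : q ≠ 0) (hb1 : b ≠ -q) (hb2 : b ≠ -q^2) :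
    Function.Surjective (evalMap Λ (D.M 1 b c)) := by
  have hqb : q + b ≠ 0 := fun hc => hb1 (by linear_combination hc)
  have hq2b : q^2 + b ≠ 0 := fun hc => hb2 (by linear_combination hc)
  have hBne : 1 + b/q ≠ 0 := by
    intro hc
    apply hqb
    field_simp at hc
    linear_combination hc
  intro g
  have key : ∀ v : Λ, lam1 D b c * v = 0 →
      (MulOpposite.op v) • (f1 D b c hq) = 0 := by
    intro v hv
    apply LinearMap.ext
    intro m
    obtain ⟨u, rfl⟩ := Submodule.mkQ_surjective _ m
    rw [LinearMap.smul_apply, f1_apply, MulOpposite.smul_eq_mul_unop,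
      MulOpposite.unop_op, mul_assoc, hv, mul_zero, LinearMap.zero_apply]
  have keyg : ∀ v : Λ, lam1 D b c * v = 0 → g (f1 D b c hq) * v = 0 := by
    intro v hv
    have h1 := map_smul g (MulOpposite.op v) (f1 D b c hq)
    rw [key v hv, map_zero, MulOpposite.smul_eq_mul_unop,
      MulOpposite.unop_op] at h1
    exact h1.symm
  set ν := g (f1 D b c hq) with hν
  have hy := keyg _ (D.lam1_mul_yx b c hq)
  have hp := keyg _ (D.lam1_mul_wpp b c hq)
  rw [yx_cmb, mul_cmb_right] at hy
  obtain ⟨-, -, -, -, hy4, -⟩ := D.cmb_eq_zero hy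
  simp only [mul_one, mul_zero, add_zero, zero_add, sub_zero] at hy4
  rw [wpp, mul_cmb_right] at hp
  obtain ⟨-, -, -, -, hp4, hp5⟩ := D.cmb_eq_zero hp
  have h3a : D.basis.repr ν 3 * q = -(c*(q+b)) * D.basis.repr ν 1 := by
    apply mul_right_cancel₀ (mul_ne_zero hq hq2b)
    linear_combination hp5
  have hν3 : D.basis.repr ν 3 = -(c*(1+b/q)) * D.basis.repr ν 1 := by
    field_simp
    first
    | linear_combination h3a
    | linear_combination -h3a
    | linear_combination q * h3a
    | linear_combination -(q * h3a)
  have h2a : D.basis.repr ν 2 * q = b * D.basis.repr ν 1 := by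
    apply mul_right_cancel₀ (pow_ne_zero 3 hq)
    linear_combination hp4
  have hν2 : D.basis.repr ν 2 = b/q * D.basis.repr ν 1 := by
    field_simp
    first
    | linear_combination h2a
    | linear_combination -h2a
    | linear_combination q * h2a
    | linear_combination -(q * h2a)
  have hνc : ν = cmb D 0 (D.basis.repr ν 1) (b/q * D.basis.repr ν 1)
      (-(c*(1+b/q)) * D.basis.repr ν 1) (D.basis.repr ν 4) (D.basis.repr ν 5) := by
    conv_lhs => rw [D.expand ν]
    exact D.cmb_congr hy4 rfl hν2 hν3 rfl rfl
  have halam : cmb D (D.basis.repr ν 1) 0 (D.basis.repr ν 4) (D.basis.repr ν 5 / (1 + b/q)) 0 0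
      * lam1 D b c = ν := by
    rw [lam1, cmb_mul]
    conv_rhs => rw [hνc]
    refine D.cmb_congr (by ring) (by ring) (by ring) (by ring) (by ring) ?_
    field_simp
    try ring
  refine ⟨(D.U 1 b c).mkQ (cmb D (D.basis.repr ν 1) 0 (D.basis.repr ν 4)
    (D.basis.repr ν 5 / (1 + b/q)) 0 0), ?_⟩
  apply LinearMap.ext
  intro f
  show f ((D.U 1 b c).mkQ (cmb D (D.basis.repr ν 1) 0 (D.basis.repr ν 4)
    (D.basis.repr ν 5 / (1 + b/q)) 0 0)) = g f
  obtain ⟨s, t', r', hμ⟩ := D.value_constraint b c hq f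
  have hlam : lam1 D b c * cmb D s 0 (-(t'/q)) (r' + t'/q * (-(c*(1+b/q)))) 0 0 =
      f ((D.U 1 b c).mkQ 1) := by
    rw [lam1, cmb_mul, hμ]
    refine D.cmb_congr (by ring) (by ring) (by ring) (by ring) (by field_simp; try ring) (by ring)
  have hf : f = (MulOpposite.op (cmb D s 0 (-(t'/q)) (r' + t'/q * (-(c*(1+b/q)))) 0 0)) •
      (f1 D b c hq) := by
    apply LinearMap.ext
    intro m
    obtain ⟨u, rfl⟩ := Submodule.mkQ_surjective _ m
    rw [LinearMap.smul_apply, f1_apply, MulOpposite.smul_eq_mul_unop,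
      MulOpposite.unop_op, mul_assoc, hlam]
    conv_lhs => rw [mk_smul_one]
    rw [map_smul, smul_eq_mul]
  calc f ((D.U 1 b c).mkQ (cmb D (D.basis.repr ν 1) 0 (D.basis.repr ν 4)
        (D.basis.repr ν 5 / (1 + b/q)) 0 0))
      = (MulOpposite.op (cmb D s 0 (-(t'/q)) (r' + t'/q * (-(c*(1+b/q)))) 0 0) •
          f1 D b c hq) ((D.U 1 b c).mkQ (cmb D (D.basis.repr ν 1) 0 (D.basis.repr ν 4)
        (D.basis.repr ν 5 / (1 + b/q)) 0 0)) := by rw [← hf]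
    _ = (cmb D (D.basis.repr ν 1) 0 (D.basis.repr ν 4) (D.basis.repr ν 5 / (1 + b/q)) 0 0
          * lam1 D b c) * cmb D s 0 (-(t'/q)) (r' + t'/q * (-(c*(1+b/q)))) 0 0 := by
        rw [LinearMap.smul_apply, f1_apply, MulOpposite.smul_eq_mul_unop, MulOpposite.unop_op]
    _ = MulOpposite.op (cmb D s 0 (-(t'/q)) (r' + t'/q * (-(c*(1+b/q)))) 0 0) • ν := by
        rw [halam, MulOpposite.smul_eq_mul_unop, MulOpposite.unop_op]
    _ = g (MulOpposite.op (cmb D s 0 (-(t'/q)) (r' + t'/q * (-(c*(1+b/q)))) 0 0) •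
          f1 D b c hq) := by rw [map_smul, hν]
    _ = g f := by rw [← hf]

lemma z_mul_expand (A : Λ) : D.z * A =
    cmb D 0 0 0 (D.basis.repr A 0) 0 (D.basis.repr A 1 + D.basis.repr A 2) := by
  rw [z_cmb, cmb_mul_left]
  exact D.cmb_congr (by ring) (by ring) (by ring) (by ring) (by ring) (by ring)

lemma zx_mul_expand (A : Λ) : (D.z * D.x) * A =
    cmb D 0 0 0 0 0 (D.basis.repr A 0) := by
  rw [zx_cmb, cmb_mul_left]
  exact D.cmb_congr (by ring) (by ring) (by ring) (by ring) (by ring) (by ring)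

/-- The functional `g ∈ M**` witnessing failure of surjectivity when `b = -q²`. -/
noncomputable def gmap (hq : q ≠ 0) (hb : b = -q^2) :
    ((D.M 1 b c) →ₗ[Λ] Λ) →ₗ[Λᵐᵒᵖ] Λ where
  toFun f := (D.basis.repr (f ((D.U 1 b c).mkQ 1)) 1) • D.z
      - (D.basis.repr (f ((D.U 1 b c).mkQ 1)) 4 / q) • (D.z * D.x)
  map_add' f g := by
    simp only [LinearMap.add_apply, map_add, Finsupp.coe_add, Pi.add_apply, add_div]
    module
  map_smul' m f := by
    obtain ⟨s, t, r, hμ⟩ := D.value_constraint b c hq f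
    simp only [LinearMap.smul_apply, MulOpposite.smul_eq_mul_unop, RingHom.id_apply]
    rw [hμ, cmb_mul_left, repr_cmb1, repr_cmb4, repr_cmb1, repr_cmb4, sub_mul,
      smul_mul_assoc, smul_mul_assoc, D.z_mul_expand (MulOpposite.unop m),
      D.zx_mul_expand (MulOpposite.unop m), zx_cmb, z_cmb, cmb_smul, cmb_smul,
      cmb_smul, cmb_smul, cmb_sub, cmb_sub]
    subst hb
    refine D.cmb_congr (by ring) (by ring) (by ring) (by ring) (by ring) ?_
    field_simp
    ring

lemma not_surj (hq : q ≠ 0) (hb : b = -q^2) :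
    ¬ Function.Surjective (evalMap Λ (D.M 1 b c)) := by
  intro hs
  obtain ⟨m, hm⟩ := hs (D.gmap b c hq hb)
  obtain ⟨u, rfl⟩ := Submodule.mkQ_surjective _ m
  have h := DFunLike.congr_fun hm (f1 D b c hq)
  have hf1 : f1 D b c hq ((D.U 1 b c).mkQ 1) = lam1 D b c := by
    rw [f1_apply, one_mul]
  have hR : D.gmap b c hq hb (f1 D b c hq) = D.z := by
    show (D.basis.repr (f1 D b c hq ((D.U 1 b c).mkQ 1)) 1) • D.z
        - (D.basis.repr (f1 D b c hq ((D.U 1 b c).mkQ 1)) 4 / q) • (D.z * D.x) = D.z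
    rw [hf1, lam1, repr_cmb1, repr_cmb4]
    simp
  have hL : D.gmap b c hq hb (f1 D b c hq) = u * lam1 D b c := by
    rw [← h, ← f1_apply D b c hq u]
    rfl
  have h' : u * lam1 D b c = D.z := by rw [← hL, hR]
  rw [lam1, mul_cmb_right, z_cmb] at h'
  obtain ⟨-, e1, -, e3, -, -⟩ := D.cmb_inj h'
  refine absurd ?_ (one_ne_zero (α := k))
  linear_combination (-(c*(1+b/q))) * e1 - e3

end LambdaAlg

end Aux14

/-- `M(1,b,c)` is reflexive (the canonical evaluation map `M → M**` is bijective)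
if and only if `b ≠ −q` and `b ≠ −q²`. -/
theorem statement14 (k : Type) [Field k] (q : k) (hq : q ≠ 0)
    (Λ : Type) [Ring Λ] [Algebra k Λ] (D : LambdaAlg k q Λ) (b c : k) :
    Function.Bijective (evalMap Λ (D.M 1 b c)) ↔ b ≠ -q ∧ b ≠ -q ^ 2 := by
  constructor
  · rintro ⟨hinj, hsurj⟩
    constructor
    · intro hb
      exact D.not_inj b c hq hb hinj
    · intro hb2
      by_cases hb1 : b = -q
      · exact D.not_inj b c hq hb1 hinj
      · exact D.not_surj b c hq hb2 hsurj
  · rintro ⟨hb1, hb2⟩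
    exact ⟨D.eval_injective b c hq hb1, D.eval_surjective b c hq hb1 hb2⟩
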